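/- The edge weights used in the Dijkstra update are non-negative: for a reasonable strategy σ and every edge (u,v) in A_⊥ restricted to I_σ, the weight w(u,v) := (℘(u) + V_σ(v)) − V_σ(u) satisfies w(u,v) ≽ ō; moreover, for any path t_0 t_1 … t_n ⊥ in this restricted graph, ℘(t_0 … t_n) − V_σ(t_0) = w(t_0,t_1) + w(t_1,t_2) + … + w(t_n,⊥). -/

import Mathlib

open scoped Classical

/-- The order `≺` on integer color profiles `ℤ^d`: compare at the largest index where
they differ; at an even index the larger entry wins, at an odd index the smaller one. -/
def FinLt {d : ℕ} (p q : Fin d → ℤ) : Prop :=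
  ∃ k : Fin d, p k ≠ q k ∧ (∀ j, k < j → p j = q j) ∧
    ((Even (k : ℕ) ∧ p k < q k) ∨ (Odd (k : ℕ) ∧ q k < p k))

/-- Reflexive closure `≼` of `FinLt`. -/
def FinLe {d : ℕ} (p q : Fin d → ℤ) : Prop := p = q ∨ FinLt p q

/-- Color profiles: `ℤ^d` together with `-∞` (`bot`) and `∞` (`top`). -/
inductive Prof (d : ℕ) where
  | bot : Prof d
  | fin : (Fin d → ℤ) → Prof d
  | top : Prof d

/-- The order `≺` on color profiles: `-∞` is the bottom element, `∞` the top element,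
finite profiles are compared by `FinLt`. -/
def Prof.Lt {d : ℕ} : Prof d → Prof d → Prop
  | .bot, .bot => False
  | .bot, .fin _ => True
  | .bot, .top => True
  | .fin _, .bot => False
  | .fin p, .fin q => FinLt p q
  | .fin _, .top => True
  | .top, _ => False

/-- Reflexive closure `≼` of `Prof.Lt`. -/
def Prof.Le {d : ℕ} (p q : Prof d) : Prop := p = q ∨ Prof.Lt p q

/-- Adding a vector in `ℤ^d` to a profile; `±∞` are absorbing. -/
def Prof.add {d : ℕ} : Prof d → (Fin d → ℤ) → Prof d
  | .bot, _ => .bot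
  | .fin p, q => .fin (p + q)
  | .top, _ => .top

/-- A parity game arena: a finite directed graph, each node owned by player 0 or 1 and
colored by a color in `{0,…,d-1}`; every node has at least one successor. -/
structure PGA (V : Type) (d : ℕ) where
  edge : V → V → Prop
  owner : V → Fin 2
  color : V → Fin d
  succ : ∀ v, ∃ w, edge v w

variable {V : Type} {d : ℕ}

/-- The profile `℘(s)` of a single vertex: the unit vector at its color. -/
def unitProf (A : PGA V d) (s : V) : Fin d → ℤ := fun k => if A.color s = k then 1 else 0

/-- The color profile `℘(π)` of a finite sequence of vertices: how often each color occurs. -/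
def listProf (A : PGA V d) (L : List V) : Fin d → ℤ := fun k => ((L.map A.color).count k : ℤ)

/-- `℘(s) + p` for a vertex `s` and a profile `p`. -/
def addV (A : PGA V d) (s : V) (p : Prof d) : Prof d := p.add (unitProf A s)

/-- Edges of the escape arena `A_⊥` over `Option V`, where `none` is the sink `⊥`:
all edges of `A`, plus an edge from every player-0 node to `⊥`; `⊥` has no outgoing edges. -/
def EdgeB (A : PGA V d) : Option V → Option V → Prop
  | some u, some v => A.edge u v
  | some u, none => A.owner u = 0
  | none, _ => False

/-- A (memoryless, possibly non-deterministic) strategy of player 0 in `A_⊥`: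
a set of player-0 edges giving every player-0 node at least one successor. -/
def Strategy0 (A : PGA V d) (σ : V → Option V → Prop) : Prop :=
  (∀ s t, σ s t → A.owner s = 0 ∧ EdgeB A (some s) t) ∧
  (∀ s, A.owner s = 0 → ∃ t, σ s t)

/-- A (memoryless, possibly non-deterministic) strategy of player 1 (who never moves to `⊥`). -/
def Strategy1 (A : PGA V d) (τ : V → V → Prop) : Prop :=
  (∀ s t, τ s t → A.owner s = 1 ∧ A.edge s t) ∧
  (∀ s, A.owner s = 1 → ∃ t, τ s t)

/-- A strategy is deterministic if it picks at most one successor per node. -/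
def Deterministic (σ : V → Option V → Prop) : Prop :=
  ∀ s t t', σ s t → σ s t' → t = t'

/-- Edges of `A_⊥` restricted to a player-0 strategy `σ` that stay inside `V`
(cycles of `A_⊥|σ` never pass through `⊥`). -/
def EdgeSig (A : PGA V d) (σ : V → Option V → Prop) (u v : V) : Prop :=
  (A.owner u = 1 ∧ A.edge u v) ∨ σ u (some v)

/-- A (nonempty) cycle in `A_⊥|σ`: consecutive edges plus the wrap-around edge. -/
def CycleIn (A : PGA V d) (σ : V → Option V → Prop) (L : List V) : Prop :=
  L ≠ [] ∧ List.Chain' (EdgeSig A σ) L ∧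
  ∀ a b, L.head? = some a → L.getLast? = some b → EdgeSig A σ b a

/-- A player-0 strategy is reasonable if `A_⊥|σ` has no 1-dominated cycle,
i.e. on every cycle the dominating (maximal) color is even. -/
def Reasonable (A : PGA V d) (σ : V → Option V → Prop) : Prop :=
  ∀ L, CycleIn A σ L → ∀ v ∈ L, (∀ w ∈ L, A.color w ≤ A.color v) → Even ((A.color v : ℕ))

/-- One step of a play in `A_⊥` with player 0 using `σ` and player 1 using `τ`;
the sink `⊥` is absorbing. -/
def PlayStep (A : PGA V d) (σ : V → Option V → Prop) (τ : V → V → Prop) :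
    Option V → Option V → Prop
  | none, y => y = none
  | some u, y => (A.owner u = 0 ∧ σ u y) ∨ (A.owner u = 1 ∧ ∃ v, y = some v ∧ τ u v)

/-- A play from `s` in `A_⊥|σ,τ` (modelled with absorbing sink). -/
def IsPlay (A : PGA V d) (σ : V → Option V → Prop) (τ : V → V → Prop)
    (s : V) (π : ℕ → Option V) : Prop :=
  π 0 = some s ∧ ∀ n, PlayStep A σ τ (π n) (π (n + 1))

/-- One step of a play in `A_⊥` with player 0 using `σ`, player 1 unconstrained. -/
def PlayStepB (A : PGA V d) (σ : V → Option V → Prop) : Option V → Option V → Prop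
  | none, y => y = none
  | some u, y => (A.owner u = 0 ∧ σ u y) ∨ (A.owner u = 1 ∧ ∃ v, y = some v ∧ A.edge u v)

/-- A play from `s` in `A_⊥|σ` against an arbitrary player 1. -/
def IsPlayB (A : PGA V d) (σ : V → Option V → Prop) (s : V) (π : ℕ → Option V) : Prop :=
  π 0 = some s ∧ ∀ n, PlayStepB A σ (π n) (π (n + 1))

/-- Color `k` occurs at position `n` of the play `π`. -/
def ColorAt (A : PGA V d) (π : ℕ → Option V) (n : ℕ) (k : Fin d) : Prop :=
  ∃ v, π n = some v ∧ A.color v = k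

/-- An infinite play of `A_⊥` (never reaching `⊥`) is won by player 0 iff the maximal color
occurring infinitely often is even. -/
def Won0B (A : PGA V d) (π : ℕ → Option V) : Prop :=
  ∃ k : Fin d, Even ((k : ℕ)) ∧ (∀ N, ∃ n ≥ N, ColorAt A π n k) ∧
    ∀ j : Fin d, k < j → ∃ N, ∀ n ≥ N, ¬ ColorAt A π n j

/-- The value `℘(π)` of a play in `A_⊥`: for a finite play (reaching `⊥`), the color profile
of its vertices; for an infinite play, `∞` if player 0 wins it and `-∞` otherwise. -/
noncomputable def PlayValue (A : PGA V d) (π : ℕ → Option V) : Prof d :=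
  if h : ∃ n, π n = none then
    .fin (fun k =>
      (((Finset.range (Nat.find h)).filter (fun n => ColorAt A π n k)).card : ℤ))
  else if Won0B A π then .top else .bot

/-- `p` is the `≺`-maximum of the set `S` of profiles. -/
def IsMaxOf {d : ℕ} (S : Set (Prof d)) (p : Prof d) : Prop := p ∈ S ∧ ∀ q ∈ S, Prof.Le q p

/-- `p` is the `≺`-minimum of the set `S` of profiles. -/
def IsMinOf {d : ℕ} (S : Set (Prof d)) (p : Prof d) : Prop := p ∈ S ∧ ∀ q ∈ S, Prof.Le p q

/-- `W` is the valuation `𝒱_σ` of the player-0 strategy `σ`: `W(⊥) = ō`, and `W(s)` is the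
`≺`-minimal value player 1 can guarantee (by a memoryless strategy) in any play from `s`
in `A_⊥|σ`. -/
def IsValuation (A : PGA V d) (σ : V → Option V → Prop) (W : Option V → Prof d) : Prop :=
  W none = .fin 0 ∧
  ∀ s : V, IsMinOf
    { p | ∃ τ, Strategy1 A τ ∧
        IsMaxOf { q | ∃ π, IsPlay A σ τ s π ∧ q = PlayValue A π } p }
    (W (some s))

/-- `(s,t)` is an improvement of `σ` w.r.t. the valuation `W`: a player-0 edge with
`W(s) ≼ ℘(s) + W(t)`.  `I_σ` is the set (strategy) of all improvements. -/
def Improvement (A : PGA V d) (W : Option V → Prof d) (s : V) (t : Option V) : Prop :=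
  A.owner s = 0 ∧ EdgeB A (some s) t ∧ Prof.Le (W (some s)) (addV A s (W t))

/-- `(s,t)` is a strict improvement of `σ` w.r.t. `W`: a player-0 edge with
`W(s) ≺ ℘(s) + W(t)`. -/
def StrictImp (A : PGA V d) (W : Option V → Prof d) (s : V) (t : Option V) : Prop :=
  A.owner s = 0 ∧ EdgeB A (some s) t ∧ Prof.Lt (W (some s)) (addV A s (W t))

/-- A memoryless strategy of player 0 in the original parity game arena `A`. -/
def Strat0A (A : PGA V d) (σ : V → V → Prop) : Prop :=
  (∀ s t, σ s t → A.owner s = 0 ∧ A.edge s t) ∧ (∀ s, A.owner s = 0 → ∃ t, σ s t)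

/-- A play in `A` from `s` where player 0 follows `σ` and player 1 is unconstrained. -/
def PlayA (A : PGA V d) (σ : V → V → Prop) (s : V) (π : ℕ → V) : Prop :=
  π 0 = s ∧ ∀ n, (A.owner (π n) = 0 → σ (π n) (π (n + 1))) ∧
    (A.owner (π n) = 1 → A.edge (π n) (π (n + 1)))

/-- Parity winning condition in `A` for player 0: the maximal color seen infinitely often is even. -/
def Won0A (A : PGA V d) (π : ℕ → V) : Prop :=
  ∃ k : Fin d, Even ((k : ℕ)) ∧ (∀ N, ∃ n ≥ N, A.color (π n) = k) ∧
    ∀ j : Fin d, k < j → ∃ N, ∀ n ≥ N, A.color (π n) ≠ j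

/-- Player 0 wins the node `s` of the parity game arena `A` (with a memoryless strategy). -/
def Win0 (A : PGA V d) (s : V) : Prop :=
  ∃ σ, Strat0A A σ ∧ ∀ π, PlayA A σ s π → Won0A A π

/-- An acyclic path of `A_⊥` terminating in `⊥`: pairwise distinct vertices, consecutive
edges of `A`, and the last vertex owned by player 0 (so it has the edge to `⊥`). -/
def AcyclicToBot (A : PGA V d) (L : List V) : Prop :=
  L.Nodup ∧ List.Chain' A.edge L ∧ ∀ b, L.getLast? = some b → A.owner b = 0

/-- Edges of `A_⊥` restricted to the all-improvements strategy `I_σ`. -/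
def EdgeRestrI {V : Type} {d : ℕ} (A : PGA V d) (W : Option V → Prof d) :
    Option V → Option V → Prop
  | none, _ => False
  | some u, y => (A.owner u = 1 ∧ ∃ v, y = some v ∧ A.edge u v) ∨ Improvement A W u y


theorem FinLt_add {d : ℕ} {p q c : Fin d → ℤ} (h : FinLt p q) : FinLt (p + c) (q + c) := by
  obtain ⟨k, hne, hj, hp⟩ := h
  refine ⟨k, by simpa using hne, fun j hjk => by simp [hj j hjk], ?_⟩
  rcases hp with ⟨he, hlt⟩ | ⟨ho, hlt⟩
  · exact Or.inl ⟨he, by simpa using hlt⟩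
  · exact Or.inr ⟨ho, by simpa using hlt⟩

theorem FinLe_add {d : ℕ} {p q c : Fin d → ℤ} (h : FinLe p q) : FinLe (p + c) (q + c) := by
  rcases h with h | h
  · exact Or.inl (by rw [h])
  · exact Or.inr (FinLt_add h)

theorem FinLt_trans {d : ℕ} {p q r : Fin d → ℤ} (h1 : FinLt p q) (h2 : FinLt q r) :
    FinLt p r := by
  obtain ⟨k1, hne1, hj1, hp1⟩ := h1
  obtain ⟨k2, hne2, hj2, hp2⟩ := h2
  rcases lt_trichotomy k1 k2 with hlt | heq | hgt
  · have e12 : p k2 = q k2 := hj1 k2 hlt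
    refine ⟨k2, by rw [e12]; exact hne2, fun j hj => ?_, ?_⟩
    · rw [hj1 j (hlt.trans hj), hj2 j hj]
    · rcases hp2 with ⟨he, h⟩ | ⟨ho, h⟩
      · exact Or.inl ⟨he, by rw [e12]; exact h⟩
      · exact Or.inr ⟨ho, by rw [e12]; exact h⟩
  · subst heq
    refine ⟨k1, ?_, fun j hj => (hj1 j hj).trans (hj2 j hj), ?_⟩
    · rcases hp1 with ⟨he, h⟩ | ⟨ho, h⟩
      · rcases hp2 with ⟨_, h'⟩ | ⟨ho', _⟩
        · exact ne_of_lt (h.trans h')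
        · exact absurd he (by simpa using ho')
      · rcases hp2 with ⟨he', _⟩ | ⟨_, h'⟩
        · exact absurd he' (by simpa using ho)
        · exact ne_of_gt (h'.trans h)
    · rcases hp1 with ⟨he, h⟩ | ⟨ho, h⟩
      · rcases hp2 with ⟨_, h'⟩ | ⟨ho', _⟩
        · exact Or.inl ⟨he, h.trans h'⟩
        · exact absurd he (by simpa using ho')
      · rcases hp2 with ⟨he', _⟩ | ⟨_, h'⟩
        · exact absurd he' (by simpa using ho)
        · exact Or.inr ⟨ho, h'.trans h⟩
  · have e12 : q k1 = r k1 := hj2 k1 hgt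
    refine ⟨k1, by rw [← e12]; exact hne1, fun j hj => ?_, ?_⟩
    · rw [hj1 j hj, hj2 j (hgt.trans hj)]
    · rcases hp1 with ⟨he, h⟩ | ⟨ho, h⟩
      · exact Or.inl ⟨he, by rw [← e12]; exact h⟩
      · exact Or.inr ⟨ho, by rw [← e12]; exact h⟩

theorem FinLe_trans {d : ℕ} {p q r : Fin d → ℤ} (h1 : FinLe p q) (h2 : FinLe q r) :
    FinLe p r := by
  rcases h1 with rfl | h1
  · exact h2
  rcases h2 with rfl | h2
  · exact Or.inr h1
  · exact Or.inr (FinLt_trans h1 h2)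

theorem FinLe_total {d : ℕ} (p q : Fin d → ℤ) : FinLe p q ∨ FinLt q p := by
  by_cases hpq : p = q
  · exact Or.inl (Or.inl hpq)
  · have hs : (Finset.univ.filter (fun k => p k ≠ q k)).Nonempty := by
      rcases Function.ne_iff.mp hpq with ⟨k, hk⟩
      exact ⟨k, by simp [hk]⟩
    set k := (Finset.univ.filter (fun k => p k ≠ q k)).max' hs with hkdef
    have hkmem : p k ≠ q k := by
      have := (Finset.univ.filter (fun k => p k ≠ q k)).max'_mem hs
      simpa using this
    have hjeq : ∀ j, k < j → p j = q j := by
      intro j hj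
      by_contra hne
      have : j ≤ k := Finset.le_max' _ j (by simpa using hne)
      exact absurd hj (not_lt.mpr this)
    rcases Nat.even_or_odd (k : ℕ) with he | ho
    · rcases lt_or_gt_of_ne hkmem with h | h
      · exact Or.inl (Or.inr ⟨k, hkmem, hjeq, Or.inl ⟨he, h⟩⟩)
      · exact Or.inr ⟨k, hkmem.symm, fun j hj => (hjeq j hj).symm, Or.inl ⟨he, h⟩⟩
    · rcases lt_or_gt_of_ne hkmem with h | h
      · exact Or.inr ⟨k, hkmem.symm, fun j hj => (hjeq j hj).symm, Or.inr ⟨ho, h⟩⟩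
      · exact Or.inl (Or.inr ⟨k, hkmem, hjeq, Or.inr ⟨ho, h⟩⟩)

theorem FinLe_iff_sub {d : ℕ} {p q : Fin d → ℤ} : FinLe p q ↔ FinLe 0 (q - p) := by
  constructor
  · intro h
    have := FinLe_add (c := -p) h
    simpa [sub_eq_add_neg] using this
  · intro h
    have := FinLe_add (c := p) h
    simpa [sub_eq_add_neg, add_assoc, add_comm, add_left_comm] using this

theorem finset_exists_max {d : ℕ} (s : Finset (Fin d → ℤ)) (hs : s.Nonempty) :
    ∃ m ∈ s, ∀ x ∈ s, FinLe x m := by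
  classical
  induction s using Finset.induction_on with
  | empty => exact absurd hs (by simp)
  | @insert a s ha ih =>
    rcases s.eq_empty_or_nonempty with rfl | hs'
    · exact ⟨a, by simp, by simp [FinLe]⟩
    · obtain ⟨m, hm, hmax⟩ := ih hs'
      rcases FinLe_total a m with h | h
      · exact ⟨m, Finset.mem_insert_of_mem hm, by
          intro x hx'
          rcases Finset.mem_insert.mp hx' with rfl | hx''
          · exact h
          · exact hmax x hx''⟩
      · exact ⟨a, Finset.mem_insert_self a s, by
          intro x hx'
          rcases Finset.mem_insert.mp hx' with rfl | hx''
          · exact Or.inl rfl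
          · exact FinLe_trans (hmax x hx'') (Or.inr h)⟩

section Game
variable {V : Type} {d : ℕ}

theorem fin2_cases (x : Fin 2) : x = 0 ∨ x = 1 := by
  rcases x with ⟨_ | _ | v, hv⟩
  · exact Or.inl rfl
  · exact Or.inr rfl
  · omega

/-- Combined one-step relation on `V` for plays under `σ, τ`. -/
def SRel (A : PGA V d) (σ : V → Option V → Prop) (τ : V → V → Prop) (x y : V) : Prop :=
  (A.owner x = 0 ∧ σ x (some y)) ∨ (A.owner x = 1 ∧ τ x y)

theorem srel_edgeSig {A : PGA V d} {σ : V → Option V → Prop} {τ : V → V → Prop}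
    (hτ : Strategy1 A τ) {x y : V} (h : SRel A σ τ x y) : EdgeSig A σ x y := by
  rcases h with ⟨_, h⟩ | ⟨ho, h⟩
  · exact Or.inr h
  · exact Or.inl ⟨ho, (hτ.1 x y h).2⟩

theorem playstep_srel {A : PGA V d} {σ : V → Option V → Prop} {τ : V → V → Prop} {x y : V}
    (h : PlayStep A σ τ (some x) (some y)) : SRel A σ τ x y := by
  rcases h with ⟨ho, h⟩ | ⟨ho, v, hv, hτ⟩
  · exact Or.inl ⟨ho, h⟩
  · exact Or.inr ⟨ho, by cases hv; exact hτ⟩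

theorem play_absorb {A : PGA V d} {σ : V → Option V → Prop} {τ : V → V → Prop} {s : V}
    {π : ℕ → Option V} (h : IsPlay A σ τ s π) {m : ℕ} (hm : π m = none) :
    ∀ n, m ≤ n → π n = none := by
  intro n hn
  induction n with
  | zero => exact (Nat.le_zero.mp hn) ▸ hm
  | succ k ih =>
    rcases Nat.lt_or_ge m (k+1) with hlt | hge
    · have hk : π k = none := ih (by omega)
      have := h.2 k
      rw [hk] at this
      exact this
    · exact (Nat.le_antisymm hn hge) ▸ hm

theorem exists_play (A : PGA V d) {σ : V → Option V → Prop} {τ : V → V → Prop}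
    (hσ : Strategy0 A σ) (hτ : Strategy1 A τ) (s : V) : ∃ π, IsPlay A σ τ s π := by
  have hstep : ∀ x : Option V, ∃ y, PlayStep A σ τ x y := by
    intro x
    cases x with
    | none => exact ⟨none, rfl⟩
    | some u =>
      rcases fin2_cases (A.owner u) with h0 | h1
      · obtain ⟨t, ht⟩ := hσ.2 u h0
        exact ⟨t, Or.inl ⟨h0, ht⟩⟩
      · obtain ⟨t, ht⟩ := hτ.2 u h1
        exact ⟨some t, Or.inr ⟨h1, t, rfl, ht⟩⟩
  choose g hg using hstep
  refine ⟨fun n => g^[n] (some s), by simp, fun n => ?_⟩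
  show PlayStep A σ τ (g^[n] (some s)) (g^[n+1] (some s))
  rw [Function.iterate_succ_apply']
  exact hg _

/-- Prepend a vertex to a play. -/
def consP (v : V) (π : ℕ → Option V) : ℕ → Option V := fun n =>
  match n with
  | 0 => some v
  | (k+1) => π k

theorem isPlay_cons {A : PGA V d} {σ : V → Option V → Prop} {τ : V → V → Prop} {x y : V}
    {π : ℕ → Option V} (hstep : SRel A σ τ x y) (h : IsPlay A σ τ y π) :
    IsPlay A σ τ x (consP x π) := by
  refine ⟨rfl, fun n => ?_⟩
  cases n with
  | zero =>
    show PlayStep A σ τ (some x) (π 0)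
    rw [h.1]
    rcases hstep with ⟨h0, hs⟩ | ⟨h1, ht⟩
    · exact Or.inl ⟨h0, hs⟩
    · exact Or.inr ⟨h1, y, rfl, ht⟩
  | succ k => exact h.2 k

theorem colorAt_cons_succ (A : PGA V d) (x : V) (π : ℕ → Option V) (n : ℕ) (k : Fin d) :
    ColorAt A (consP x π) (n+1) k ↔ ColorAt A π n k := Iff.rfl

theorem colorAt_cons_zero (A : PGA V d) (x : V) (π : ℕ → Option V) (k : Fin d) :
    ColorAt A (consP x π) 0 k ↔ A.color x = k := by
  constructor
  · rintro ⟨v, hv, hc⟩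
    have : x = v := by simpa [consP] using hv
    exact this ▸ hc
  · intro h
    exact ⟨x, rfl, h⟩

theorem won0B_cons (A : PGA V d) (x : V) (π : ℕ → Option V) :
    Won0B A (consP x π) ↔ Won0B A π := by
  constructor
  · rintro ⟨k, he, hio, hev⟩
    refine ⟨k, he, fun N => ?_, fun j hj => ?_⟩
    · obtain ⟨n, hn, hc⟩ := hio (N+1)
      obtain ⟨m, rfl⟩ : ∃ m, n = m + 1 := ⟨n - 1, by omega⟩
      exact ⟨m, by omega, (colorAt_cons_succ A x π m k).mp hc⟩
    · obtain ⟨N, hN⟩ := hev j hj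
      exact ⟨N, fun n hn => hN (n+1) (by omega)⟩
  · rintro ⟨k, he, hio, hev⟩
    refine ⟨k, he, fun N => ?_, fun j hj => ?_⟩
    · obtain ⟨n, hn, hc⟩ := hio N
      exact ⟨n+1, by omega, (colorAt_cons_succ A x π n k).mpr hc⟩
    · obtain ⟨N, hN⟩ := hev j hj
      refine ⟨N+1, fun n hn => ?_⟩
      obtain ⟨m, rfl⟩ : ∃ m, n = m + 1 := ⟨n - 1, by omega⟩
      exact hN m (by omega)

theorem playValue_cons (A : PGA V d) (x : V) (π : ℕ → Option V) :
    PlayValue A (consP x π) = (PlayValue A π).add (unitProf A x) := by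
  by_cases h : ∃ n, π n = none
  · have hc : ∃ n, consP x π n = none := ⟨Nat.find h + 1, Nat.find_spec h⟩
    have hfind : Nat.find hc = Nat.find h + 1 := by
      apply le_antisymm
      · exact Nat.find_le (Nat.find_spec h)
      · rcases Nat.eq_zero_or_pos (Nat.find hc) with h0 | hpos
        · have := Nat.find_spec hc
          rw [h0] at this
          exact absurd this (by simp [consP])
        · have h1 : π (Nat.find hc - 1) = none := by
            have hs := Nat.find_spec hc
            have : Nat.find hc = (Nat.find hc - 1) + 1 := by omega
            rw [this] at hs
            exact hs
          have : Nat.find h ≤ Nat.find hc - 1 := Nat.find_le h1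
          omega
    rw [PlayValue, PlayValue, dif_pos hc, dif_pos h]
    show Prof.fin _ = Prof.add _ _
    rw [Prof.add]
    congr 1
    funext k
    rw [hfind]
    have hcount : ((Finset.range (Nat.find h + 1)).filter
        (fun n => ColorAt A (consP x π) n k)).card =
        ((Finset.range (Nat.find h)).filter (fun n => ColorAt A π n k)).card
          + (if A.color x = k then 1 else 0) := by
      classical
      simp only [Finset.card_filter]
      rw [Finset.sum_range_succ']
      congr 1
      · simp only [colorAt_cons_zero]
    rw [hcount]
    show ((_ : ℕ) : ℤ) = _ + _
    push_cast
    simp [unitProf, Pi.add_apply]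
  · have hc : ¬ ∃ n, consP x π n = none := by
      rintro ⟨n, hn⟩
      cases n with
      | zero => exact absurd hn (by simp [consP])
      | succ m => exact h ⟨m, hn⟩
    rw [PlayValue, PlayValue, dif_neg hc, dif_neg h]
    rw [won0B_cons]
    by_cases hw : Won0B A π
    · simp only [if_pos hw]; rfl
    · simp only [if_neg hw]; rfl

end Game
section Loop
variable {V : Type} {d : ℕ}

theorem list_max_color (A : PGA V d) (L : List V) (hL : L ≠ []) :
    ∃ v ∈ L, ∀ w ∈ L, A.color w ≤ A.color v := by
  induction L with
  | nil => exact absurd rfl hL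
  | cons a l ih =>
    rcases l.eq_nil_or_concat with rfl | hne
    · exact ⟨a, by simp, by simp⟩
    · have hlne : l ≠ [] := by rcases hne with ⟨l', b, rfl⟩; simp
      obtain ⟨v, hv, hmax⟩ := ih hlne
      rcases le_total (A.color v) (A.color a) with h | h
      · refine ⟨a, by simp, ?_⟩
        intro w hw
        rcases List.mem_cons.mp hw with rfl | hw
        · exact le_refl _
        · exact (hmax w hw).trans h
      · refine ⟨v, List.mem_cons_of_mem _ hv, ?_⟩
        intro w hw
        rcases List.mem_cons.mp hw with rfl | hw
        · exact h
        · exact hmax w hw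

/-- The (ℤ-valued) color profile of a list of vertices. -/
def listProfZ (A : PGA V d) (L : List V) : Fin d → ℤ := (L.map (unitProf A)).sum

theorem listProfZ_nil (A : PGA V d) : listProfZ A ([] : List V) = 0 := rfl

theorem listProfZ_cons (A : PGA V d) (a : V) (l : List V) :
    listProfZ A (a :: l) = unitProf A a + listProfZ A l := by
  simp [listProfZ]

theorem listProfZ_nonneg (A : PGA V d) (L : List V) (k : Fin d) : 0 ≤ listProfZ A L k := by
  induction L with
  | nil => simp [listProfZ_nil]
  | cons a l ih =>
    rw [listProfZ_cons]
    have : (0:ℤ) ≤ unitProf A a k := by unfold unitProf; split <;> omega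
    simpa using add_nonneg this ih

theorem listProfZ_pos (A : PGA V d) {L : List V} {v : V} (hv : v ∈ L) :
    0 < listProfZ A L (A.color v) := by
  induction L with
  | nil => simp at hv
  | cons a l ih =>
    rw [listProfZ_cons]
    rcases List.mem_cons.mp hv with rfl | hv'
    · have h1 : unitProf A v (A.color v) = 1 := by simp [unitProf]
      have := listProfZ_nonneg A l (A.color v)
      simp only [Pi.add_apply]
      omega
    · have h1 : (0:ℤ) ≤ unitProf A a (A.color v) := by unfold unitProf; split <;> omega
      have := ih hv'
      simp only [Pi.add_apply]
      omega

theorem listProfZ_zero (A : PGA V d) {L : List V} {c j : Fin d}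
    (hmax : ∀ w ∈ L, A.color w ≤ c) (hj : c < j) : listProfZ A L j = 0 := by
  induction L with
  | nil => simp [listProfZ_nil]
  | cons a l ih =>
    rw [listProfZ_cons]
    have h1 : unitProf A a j = 0 := by
      have : A.color a ≤ c := hmax a (by simp)
      have : A.color a ≠ j := fun h => absurd hj (not_lt.mpr (h ▸ this))
      simp [unitProf, this]
    have h2 := ih fun w hw => hmax w (List.mem_cons_of_mem _ hw)
    simp only [Pi.add_apply, h1, h2, add_zero]

theorem cyc_pos {A : PGA V d} {σ : V → Option V → Prop} (hreas : Reasonable A σ)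
    {L : List V} (hcyc : CycleIn A σ L) : FinLt 0 (listProfZ A L) := by
  obtain ⟨v, hv, hmax⟩ := list_max_color A L hcyc.1
  have heven := hreas L hcyc v hv hmax
  have hpos := listProfZ_pos A hv
  refine ⟨A.color v, by simpa using ne_of_lt hpos, fun j hj => ?_, Or.inl ⟨heven, by simpa using hpos⟩⟩
  simp [listProfZ_zero A hmax hj]

theorem mod_succ_aux {a m r : ℕ} (hm : 0 < m) (hr : a % m = r) :
    (a + 1) % m = if r + 1 = m then 0 else r + 1 := by
  have hdm := Nat.div_add_mod a m
  have hrm : r < m := hr ▸ Nat.mod_lt a hm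
  by_cases h : r + 1 = m
  · rw [if_pos h]
    have hx : m * (a / m + 1) = m * (a / m) + m := by ring
    have he : a + 1 = m * (a / m + 1) := by omega
    rw [he, Nat.mul_mod_right]
  · rw [if_neg h]
    have he : a + 1 = m * (a / m) + (r + 1) := by omega
    rw [he, Nat.mul_add_mod]
    exact Nat.mod_eq_of_lt (by omega)

theorem no_repeat {A : PGA V d} {σ : V → Option V → Prop} {τ : V → V → Prop}
    (hτ : Strategy1 A τ) (hreas : Reasonable A σ) {s : V} {pv : Fin d → ℤ}
    (hub : ∀ q ∈ { q | ∃ π, IsPlay A σ τ s π ∧ q = PlayValue A π }, Prof.Le q (.fin pv))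
    {π : ℕ → Option V} (hπ : IsPlay A σ τ s π) {i j : ℕ} (hij : i < j)
    {w : V} (hi : π i = some w) (hj : π j = some w) : False := by
  classical
  -- every position up to j is a vertex
  have hnn : ∀ m, m ≤ j → π m ≠ none := by
    intro m hm hnone
    have := play_absorb hπ hnone j hm
    rw [hj] at this
    simp at this
  set g : ℕ → V := fun m => (π m).getD w with hgdef
  have hg : ∀ m, m ≤ j → π m = some (g m) := by
    intro m hm
    cases hmm : π m with
    | none => exact absurd hmm (hnn m hm)
    | some x => simp [hgdef, hmm]
  have hgi : g i = w := by
    have := hg i (le_of_lt hij)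
    rw [hi] at this
    exact (Option.some_inj.mp this).symm
  -- the looping reindexing
  set m0 := j - i with hm0
  have hm0pos : 0 < m0 := by omega
  set ρ : ℕ → ℕ := fun n => if n < j then n else i + (n - i) % m0 with hρdef
  have hρlt : ∀ n, ρ n < j := by
    intro n
    simp only [hρdef]
    split
    · assumption
    · have := Nat.mod_lt (n - i) hm0pos
      omega
  have hρge : ∀ n, j ≤ n → i ≤ ρ n := by
    intro n hn
    simp only [hρdef, if_neg (by omega : ¬ n < j)]
    omega
  set π' : ℕ → Option V := fun n => π (ρ n) with hπ'def
  have hρ0 : ρ 0 = 0 := by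
    simp only [hρdef]
    rw [if_pos (by omega : 0 < j)]
  have hplay' : IsPlay A σ τ s π' := by
    refine ⟨by rw [hπ'def]; simp only [hρ0]; exact hπ.1, fun n => ?_⟩
    show PlayStep A σ τ (π (ρ n)) (π (ρ (n+1)))
    rcases Nat.lt_or_ge (n+1) j with h1 | h1
    · have e1 : ρ n = n := by simp only [hρdef]; rw [if_pos (by omega : n < j)]
      have e2 : ρ (n+1) = n+1 := by simp only [hρdef]; rw [if_pos h1]
      rw [e1, e2]
      exact hπ.2 n
    · rcases Nat.eq_or_lt_of_le h1 with h2 | h2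
      · -- n + 1 = j
        have e1 : ρ n = n := by simp only [hρdef]; rw [if_pos (by omega : n < j)]
        have e2 : ρ (n+1) = i := by
          simp only [hρdef, if_neg (by omega : ¬ n+1 < j)]
          have : (n + 1 - i) % m0 = 0 := by
            rw [show n + 1 - i = m0 by omega]
            exact Nat.mod_self m0
          omega
        rw [e1, e2, hi, ← hj, h2]
        exact hπ.2 n
      · -- n ≥ j
        have hnj : ¬ n < j := by omega
        have hn1j : ¬ n + 1 < j := by omega
        set r := (n - i) % m0 with hrdef
        have hrlt : r < m0 := Nat.mod_lt _ hm0pos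
        have e1 : ρ n = i + r := by simp [hρdef, hnj, hrdef]
        have hsucc : (n + 1 - i) % m0 = if r + 1 = m0 then 0 else r + 1 := by
          rw [show n + 1 - i = (n - i) + 1 by omega]
          exact mod_succ_aux hm0pos hrdef.symm
        by_cases hcase : r + 1 = m0
        · have e2 : ρ (n+1) = i := by
            simp only [hρdef, if_neg hn1j, hsucc, if_pos hcase]
            omega
          have ej : i + r + 1 = j := by omega
          have := hπ.2 (i + r)
          rw [ej] at this
          rw [e1, e2, hi, ← hj]
          exact this
        · have e2 : ρ (n+1) = i + r + 1 := by
            simp only [hρdef, if_neg hn1j, hsucc, if_neg hcase]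
            omega
          rw [e1, e2]
          exact hπ.2 (i + r)
  have hnone' : ¬ ∃ n, π' n = none := by
    rintro ⟨n, hn⟩
    exact hnn (ρ n) (le_of_lt (hρlt n)) hn
  -- the cycle list
  set L : List V := (List.range m0).map (fun t => g (i + t)) with hLdef
  have hmemL : ∀ t, t < m0 → g (i + t) ∈ L := by
    intro t ht
    rw [hLdef]
    exact List.mem_map_of_mem (List.mem_range.mpr ht)
  have hLcyc : CycleIn A σ L := by
    refine ⟨by simp [hLdef]; omega, ?_, ?_⟩
    · rw [hLdef]
      show List.IsChain _ _; rw [List.isChain_map]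
      rw [show m0 = (m0 - 1) + 1 by omega, List.isChain_range_succ]
      intro t ht
      have hstep := hπ.2 (i + t)
      rw [hg (i+t) (by omega), hg (i+t+1) (by omega)] at hstep
      rw [show i + (t+1) = i + t + 1 by omega]
      exact srel_edgeSig hτ (playstep_srel hstep)
    · intro a b ha hb
      have hhead : L.head? = some (g i) := by
        rw [hLdef, show m0 = (m0 - 1) + 1 by omega]
        rw [List.range_succ_eq_map]
        simp
      have hlast : L.getLast? = some (g (i + (m0 - 1))) := by
        rw [hLdef, List.getLast?_map, show m0 = (m0 - 1) + 1 by omega, List.range_succ,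
          List.getLast?_concat]
        rfl
      rw [hhead] at ha
      rw [hlast] at hb
      have ha' : a = g i := by simpa using ha.symm
      have hb' : b = g (i + (m0 - 1)) := by simpa using hb.symm
      subst ha' hb'
      have hstep := hπ.2 (i + (m0 - 1))
      rw [hg (i + (m0-1)) (by omega), show i + (m0 - 1) + 1 = j by omega, hj, ← hgi] at hstep
      exact srel_edgeSig hτ (playstep_srel hstep)
  -- maximal color on the cycle
  obtain ⟨vm, hvm, hvmax⟩ := list_max_color A L hLcyc.1
  have heven := hreas L hLcyc vm hvm hvmax
  obtain ⟨t0, ht0, hgt0⟩ : ∃ t, t < m0 ∧ g (i + t) = vm := by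
    rw [hLdef] at hvm
    obtain ⟨t, ht, h⟩ := List.mem_map.mp hvm
    exact ⟨t, List.mem_range.mp ht, h⟩
  -- player 0 wins π'
  have hwin : Won0B A π' := by
    refine ⟨A.color vm, heven, ?_, ?_⟩
    · intro N
      have hge : 1 * (N+1) ≤ m0 * (N + 1) := Nat.mul_le_mul_right _ hm0pos
      have hge2 : m0 * 1 ≤ m0 * (N+1) := Nat.mul_le_mul_left _ (by omega)
      refine ⟨i + t0 + m0 * (N + 1), by omega, ?_⟩
      have hρval : ρ (i + t0 + m0 * (N+1)) = i + t0 := by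
        simp only [hρdef, if_neg (by omega : ¬ i + t0 + m0 * (N+1) < j)]
        rw [show i + t0 + m0 * (N+1) - i = t0 + m0 * (N+1) by omega]
        rw [Nat.add_mul_mod_self_left]
        rw [Nat.mod_eq_of_lt ht0]
      refine ⟨vm, ?_, rfl⟩
      show π (ρ _) = some vm
      rw [hρval, hg (i + t0) (by omega), hgt0]
    · intro j' hj'
      refine ⟨j, fun n hn => ?_⟩
      rintro ⟨x, hx, hcx⟩
      have hxval : π (ρ n) = some x := hx
      have hρn : i ≤ ρ n := hρge n hn
      have hρn' : ρ n < j := hρlt n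
      have : π (ρ n) = some (g (ρ n)) := hg (ρ n) (le_of_lt hρn')
      have hxg : x = g (i + (ρ n - i)) := by
        rw [show i + (ρ n - i) = ρ n by omega]
        rw [this] at hxval
        exact (Option.some_inj.mp hxval).symm
      have hxL : x ∈ L := hxg ▸ hmemL (ρ n - i) (by omega)
      have := hvmax x hxL
      rw [hcx] at this
      exact absurd hj' (not_lt.mpr this)
  have hval : PlayValue A π' = Prof.top := by
    rw [PlayValue, dif_neg hnone', if_pos hwin]
  have := hub (Prof.top) ⟨π', hplay', hval.symm⟩
  rcases this with h | h
  · cases h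
  · exact h
end Loop
section Reach
variable {V : Type} {d : ℕ}

theorem exists_repeat_play_from {A : PGA V d} {σ : V → Option V → Prop} {τ : V → V → Prop}
    {v u : V} (hr : Relation.ReflTransGen (SRel A σ τ) v u)
    {π : ℕ → Option V} (hπ : IsPlay A σ τ u π) {i j : ℕ} {w : V}
    (hij : i < j) (hi : π i = some w) (hj : π j = some w) :
    ∃ (π' : ℕ → Option V) (i' j' : ℕ) (w' : V),
      IsPlay A σ τ v π' ∧ i' < j' ∧ π' i' = some w' ∧ π' j' = some w' := by
  induction hr using Relation.ReflTransGen.head_induction_on with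
  | refl => exact ⟨π, i, j, w, hπ, hij, hi, hj⟩
  | head hstep _ ih =>
    obtain ⟨π', i', j', w', hp, hij', hi', hj'⟩ := ih
    exact ⟨consP _ π', i'+1, j'+1, w', isPlay_cons hstep hp, by omega, hi', hj'⟩

theorem play_reaches_bot [Fintype V] {A : PGA V d} {σ : V → Option V → Prop}
    {τ : V → V → Prop} (hτ : Strategy1 A τ) (hreas : Reasonable A σ) {v : V}
    {pv : Fin d → ℤ}
    (hub : ∀ q ∈ { q | ∃ π, IsPlay A σ τ v π ∧ q = PlayValue A π }, Prof.Le q (.fin pv))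
    {u : V} (hr : Relation.ReflTransGen (SRel A σ τ) v u)
    {π : ℕ → Option V} (hπ : IsPlay A σ τ u π) :
    ∃ n, n ≤ Fintype.card V ∧ π n = none := by
  by_contra hcon
  push_neg at hcon
  have hsome : ∀ m : Fin (Fintype.card V + 1), ∃ x, π (m : ℕ) = some x := by
    intro m
    cases hmm : π (m : ℕ) with
    | none => exact absurd hmm (hcon (m : ℕ) (by omega))
    | some x => exact ⟨x, rfl⟩
  choose f hf using hsome
  have hninj : ¬ Function.Injective f := by
    intro hinj
    have := Fintype.card_le_of_injective f hinj
    simp at this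
  obtain ⟨a, b, hab, hne⟩ := Function.not_injective_iff.mp hninj
  have hrep : ∃ (i j : ℕ) (w : V), i < j ∧ π i = some w ∧ π j = some w := by
    rcases lt_or_gt_of_ne hne with h | h
    · exact ⟨a, b, f a, by exact_mod_cast h, hf a, hab ▸ hf b⟩
    · exact ⟨b, a, f b, by exact_mod_cast h, hf b, hab ▸ hf a⟩
  obtain ⟨i, j, w, hij, hi, hj⟩ := hrep
  obtain ⟨π', i', j', w', hp, hij', hi', hj'⟩ :=
    exists_repeat_play_from hr hπ hij hi hj
  exact no_repeat hτ hreas hub hp hij' hi' hj'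

theorem exists_max_value [Fintype V] {A : PGA V d} {σ : V → Option V → Prop}
    {τ : V → V → Prop} (hσ : Strategy0 A σ) (hτ : Strategy1 A τ) {s : V}
    (hbound : ∀ π, IsPlay A σ τ s π → ∃ n, n ≤ Fintype.card V ∧ π n = none) :
    ∃ m : Fin d → ℤ,
      IsMaxOf { q | ∃ π, IsPlay A σ τ s π ∧ q = PlayValue A π } (.fin m) := by
  classical
  set N := Fintype.card V with hN
  set Q : Set (Prof d) := { q | ∃ π, IsPlay A σ τ s π ∧ q = PlayValue A π } with hQ
  have hform : ∀ q ∈ Q, ∃ p : Fin d → ℤ, q = Prof.fin p ∧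
      ∃ g : Fin d → Fin (N+1), p = fun k => ((g k : ℕ) : ℤ) := by
    rintro q ⟨π, hπ, rfl⟩
    obtain ⟨n, hn, hnone⟩ := hbound π hπ
    have h : ∃ n, π n = none := ⟨n, hnone⟩
    have hfind : Nat.find h ≤ N := le_trans (Nat.find_le hnone) hn
    rw [PlayValue, dif_pos h]
    refine ⟨_, rfl, ?_⟩
    have hcard : ∀ k : Fin d,
        ((Finset.range (Nat.find h)).filter (fun n => ColorAt A π n k)).card ≤ N := by
      intro k
      calc ((Finset.range (Nat.find h)).filter (fun n => ColorAt A π n k)).card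
          ≤ (Finset.range (Nat.find h)).card := Finset.card_filter_le _ _
        _ = Nat.find h := Finset.card_range _
        _ ≤ N := hfind
    exact ⟨fun k => ⟨_, Nat.lt_succ_of_le (hcard k)⟩, rfl⟩
  set P : Set (Fin d → ℤ) := {p | Prof.fin p ∈ Q} with hP
  have hPfin : P.Finite := by
    apply Set.Finite.subset (Set.finite_range
      (fun g : Fin d → Fin (N+1) => fun k => ((g k : ℕ) : ℤ)))
    rintro p hp
    obtain ⟨p', hpe, g, hg⟩ := hform _ hp
    have hpp : p = p' := by
      injection hpe
    exact ⟨g, by simp only []; rw [← hg, ← hpp]⟩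
  have hPne : P.Nonempty := by
    obtain ⟨π, hπ⟩ := exists_play A hσ hτ s
    have hq : PlayValue A π ∈ Q := ⟨π, hπ, rfl⟩
    obtain ⟨p, hpe, -⟩ := hform _ hq
    refine ⟨p, ?_⟩
    show Prof.fin p ∈ Q
    rw [← hpe]
    exact hq
  obtain ⟨m, hm, hmax⟩ := finset_exists_max hPfin.toFinset
    (by rwa [Set.Finite.toFinset_nonempty])
  refine ⟨m, (hPfin.mem_toFinset).mp hm, ?_⟩
  intro q hq
  obtain ⟨p, rfl, -⟩ := hform q hq
  have hp : p ∈ P := hq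
  have := hmax p (hPfin.mem_toFinset.mpr hp)
  rcases this with h | h
  · exact Or.inl (by rw [h])
  · exact Or.inr h

end Reach
section Master
variable {V : Type} {d : ℕ}

theorem profLe_fin {a b : Fin d → ℤ} : Prof.Le (.fin a) (.fin b) ↔ FinLe a b := by
  constructor
  · rintro (h | h)
    · exact Or.inl (by injection h)
    · exact Or.inr h
  · rintro (h | h)
    · exact Or.inl (by rw [h])
    · exact Or.inr h

theorem prof_add_mono {q : Prof d} {b c : Fin d → ℤ} (h : Prof.Le q (.fin b)) :
    Prof.Le (q.add c) (.fin (b + c)) := by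
  cases q with
  | bot => exact Or.inr trivial
  | fin a =>
    show Prof.Le (.fin (a + c)) (.fin (b + c))
    exact profLe_fin.mpr (FinLe_add (profLe_fin.mp h))
  | top =>
    rcases h with h | h
    · cases h
    · exact absurd h (by simp [Prof.Lt])

theorem listProfZ_append (A : PGA V d) (L M : List V) :
    listProfZ A (L ++ M) = listProfZ A L + listProfZ A M := by
  simp [listProfZ]

theorem listProfZ_eq_dropLast (A : PGA V d) (L : List V) (h : L ≠ []) :
    listProfZ A L = listProfZ A L.dropLast + unitProf A (L.getLast h) := by
  conv_lhs => rw [← List.dropLast_append_getLast h]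
  rw [listProfZ_append]
  simp [listProfZ]

theorem play_positions_reach {A : PGA V d} {σ : V → Option V → Prop} {τ : V → V → Prop}
    {v : V} {π : ℕ → Option V} (hπ : IsPlay A σ τ v π) :
    ∀ n, π n = none ∨ ∃ x, π n = some x ∧ Relation.ReflTransGen (SRel A σ τ) v x := by
  intro n
  induction n with
  | zero => exact Or.inr ⟨v, hπ.1, Relation.ReflTransGen.refl⟩
  | succ k ih =>
    rcases ih with hk | ⟨x, hx, hr⟩
    · left
      have := hπ.2 k
      rw [hk] at this
      exact this
    · cases hk1 : π (k+1) with
      | none => exact Or.inl rfl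
      | some y =>
        right
        have hstep := hπ.2 k
        rw [hx, hk1] at hstep
        exact ⟨y, rfl, hr.tail (playstep_srel hstep)⟩

/-- A chain prepended to a play, with the resulting value. -/
theorem path_prepend {A : PGA V d} {σ : V → Option V → Prop} {τ : V → V → Prop} :
    ∀ (l : List V) (x : V), List.Chain (SRel A σ τ) x l →
    ∀ (π : ℕ → Option V) (q : Fin d → ℤ),
      IsPlay A σ τ ((x :: l).getLast (by simp)) π → PlayValue A π = .fin q →
      ∃ π', IsPlay A σ τ x π' ∧
        PlayValue A π' = .fin (q + listProfZ A ((x :: l).dropLast)) := by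
  intro l
  induction l with
  | nil =>
    intro x _ π q hπ hval
    refine ⟨π, by simpa using hπ, ?_⟩
    rw [hval]
    simp [listProfZ_nil]
  | cons y l' ih =>
    intro x hch π q hπ hval
    rcases List.chain_cons.mp hch with ⟨hstep, hch'⟩
    have hlast : (x :: y :: l').getLast (by simp) = (y :: l').getLast (by simp) :=
      List.getLast_cons (by simp)
    obtain ⟨π'', hπ'', hval''⟩ := ih y hch' π q (by rw [← hlast]; exact hπ) hval
    refine ⟨consP x π'', isPlay_cons hstep hπ'', ?_⟩
    rw [playValue_cons, hval'']
    show Prof.fin _ = Prof.fin _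
    congr 1
    rw [show (x :: y :: l').dropLast = x :: (y :: l').dropLast from rfl, listProfZ_cons]
    abel

theorem fin2_ne (h : (0 : Fin 2) = 1) : False := by exact absurd h (by decide)

/-- The key inequality along player-1 edges. -/
theorem player1_edge [Fintype V] {A : PGA V d} {σ : V → Option V → Prop}
    (hσ : Strategy0 A σ) (hreas : Reasonable A σ) {Vσ : Option V → Prof d}
    (hV : IsValuation A σ Vσ) {u v : V} (hown : A.owner u = 1) (he : A.edge u v)
    {pu pv : Fin d → ℤ} (hu : Vσ (some u) = .fin pu) (hv : Vσ (some v) = .fin pv) :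
    FinLe pu (unitProf A u + pv) := by
  classical
  have hminu := hV.2 u
  have hminv := hV.2 v
  rw [hu] at hminu
  rw [hv] at hminv
  obtain ⟨τv, hτv, hmaxv⟩ := hminv.1
  have hub := hmaxv.2
  by_cases hreach : Relation.ReflTransGen (SRel A σ τv) v u
  · -- Case 2: u is reachable from v in the合 graph; use a cycle through u, v.
    have hbound : ∀ π, IsPlay A σ τv u π → ∃ n, n ≤ Fintype.card V ∧ π n = none :=
      fun π hπ => play_reaches_bot hτv hreas hub hreach hπ
    obtain ⟨m, hmmax⟩ := exists_max_value hσ hτv hbound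
    have h1 : FinLe pu m := profLe_fin.mp (hminu.2 _ ⟨τv, hτv, hmmax⟩)
    obtain ⟨πm, hπm, hπmval⟩ := hmmax.1
    obtain ⟨l, hch, hlast⟩ := List.exists_isChain_cons_of_relationReflTransGen hreach
    obtain ⟨π', hπ', hval'⟩ := path_prepend l v hch πm m
      (by rw [show (v :: l).getLast (by simp) = u from hlast]; exact hπm) hπmval.symm
    have h2 : FinLe (m + listProfZ A ((v :: l).dropLast)) pv := by
      have := hub _ ⟨π', hπ', hval'.symm⟩
      exact profLe_fin.mp this
    have hcyc : CycleIn A σ (v :: l) := by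
      refine ⟨by simp, ?_, ?_⟩
      · show List.Chain (EdgeSig A σ) v l
        exact List.Chain.imp (fun a b h => srel_edgeSig hτv h) hch
      · intro a b ha hb
        have ha' : a = v := by simpa using ha.symm
        have hb' : b = u := by
          rw [List.getLast?_eq_getLast (by simp), hlast] at hb
          simpa using hb.symm
        subst ha' hb'
        exact Or.inl ⟨hown, he⟩
    have h3 : FinLt 0 (listProfZ A (v :: l)) := cyc_pos hreas hcyc
    have hdec : listProfZ A (v :: l) =
        listProfZ A ((v :: l).dropLast) + unitProf A u := by
      rw [listProfZ_eq_dropLast A (v :: l) (by simp), hlast]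
    -- chain the inequalities
    have h4 : FinLt m (m + (listProfZ A ((v :: l).dropLast) + unitProf A u)) := by
      have := FinLt_add (c := m) h3
      rw [hdec] at this
      simpa [add_comm] using this
    have h5 : FinLe (m + listProfZ A ((v :: l).dropLast) + unitProf A u)
        (pv + unitProf A u) := FinLe_add h2
    have h6 : FinLe pu (pv + unitProf A u) := by
      refine FinLe_trans h1 (FinLe_trans (Or.inr ?_) h5)
      simpa [add_assoc] using h4
    simpa [add_comm] using h6
  · -- Case 1: u is not reachable from v; redirect player 1 at u towards v.
    set τ' : V → V → Prop := fun s t => if s = u then t = v else τv s t with hτ'def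
    have hτ'u : ∀ t, τ' u t ↔ t = v := by intro t; simp [hτ'def]
    have hτ'ne : ∀ s, s ≠ u → ∀ t, τ' s t ↔ τv s t := by
      intro s hs t; simp [hτ'def, hs]
    have hτ' : Strategy1 A τ' := by
      constructor
      · intro s t hst
        by_cases hs : s = u
        · subst hs
          have : t = v := (hτ'u t).mp hst
          subst this
          exact ⟨hown, he⟩
        · exact hτv.1 s t ((hτ'ne s hs t).mp hst)
      · intro s hs
        by_cases hsu : s = u
        · exact ⟨v, by subst hsu; exact (hτ'u v).mpr rfl⟩
        · obtain ⟨t, ht⟩ := hτv.2 s hs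
          exact ⟨t, (hτ'ne s hsu t).mpr ht⟩
    -- τv-plays from v avoid u
    have havoid : ∀ (π : ℕ → Option V), IsPlay A σ τv v π → ∀ n, π n ≠ some u := by
      intro π hπ n hn
      rcases play_positions_reach hπ n with h | ⟨x, hx, hr⟩
      · rw [h] at hn; cases hn
      · rw [hx] at hn
        have : x = u := by injection hn
        exact hreach (this ▸ hr)
    -- steps at non-u vertices agree
    have hstep_conv : ∀ (x : V), x ≠ u → ∀ y, PlayStep A σ τv (some x) y ↔
        PlayStep A σ τ' (some x) y := by
      intro x hx y
      constructor
      · rintro (⟨h0, hs⟩ | ⟨h1, z, hz, ht⟩)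
        · exact Or.inl ⟨h0, hs⟩
        · exact Or.inr ⟨h1, z, hz, (hτ'ne x hx z).mpr ht⟩
      · rintro (⟨h0, hs⟩ | ⟨h1, z, hz, ht⟩)
        · exact Or.inl ⟨h0, hs⟩
        · exact Or.inr ⟨h1, z, hz, (hτ'ne x hx z).mp ht⟩
    -- the max of plays from u under τ' is ℘(u) + pv
    have hmaxu : IsMaxOf { q | ∃ π, IsPlay A σ τ' u π ∧ q = PlayValue A π }
        (.fin (pv + unitProf A u)) := by
      constructor
      · -- membership: prepend u to the optimal play from v
        obtain ⟨πv, hπv, hπvval⟩ := hmaxv.1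
        have hπv' : IsPlay A σ τ' v πv := by
          refine ⟨hπv.1, fun n => ?_⟩
          cases hn : πv n with
          | none =>
            have := hπv.2 n
            rw [hn] at this
            exact this
          | some x =>
            have hx : x ≠ u := fun h => havoid πv hπv n (h ▸ hn)
            have := hπv.2 n
            rw [hn] at this
            exact (hstep_conv x hx _).mp this
        have hsrel : SRel A σ τ' u v := Or.inr ⟨hown, (hτ'u v).mpr rfl⟩
        refine ⟨consP u πv, isPlay_cons hsrel hπv', ?_⟩
        rw [playValue_cons, ← hπvval]
        rfl
      · -- upper bound
        rintro q ⟨π, hπ, rfl⟩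
        set tail : ℕ → Option V := fun n => π (n + 1) with htaildef
        have hπ1 : π 1 = some v := by
          have hstep := hπ.2 0
          rw [hπ.1] at hstep
          rcases hstep with ⟨h0, _⟩ | ⟨_, z, hz, ht⟩
          · rw [h0] at hown; exact absurd hown (by decide)
          · rw [hz, (hτ'u z).mp ht]
        have htail' : IsPlay A σ τ' v tail := ⟨hπ1, fun n => hπ.2 (n+1)⟩
        -- positions of tail are none or reachable from v under τv
        have htailreach : ∀ n, tail n = none ∨
            ∃ x, tail n = some x ∧ Relation.ReflTransGen (SRel A σ τv) v x := by
          intro n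
          induction n with
          | zero => exact Or.inr ⟨v, hπ1, Relation.ReflTransGen.refl⟩
          | succ k ih =>
            rcases ih with hk | ⟨x, hx, hr⟩
            · left
              have := htail'.2 k
              rw [hk] at this
              exact this
            · cases hk1 : tail (k+1) with
              | none => exact Or.inl rfl
              | some y =>
                right
                have hxu : x ≠ u := fun h => hreach (h ▸ hr)
                have hstep := htail'.2 k
                rw [hx, hk1] at hstep
                have := (hstep_conv x hxu _).mpr hstep
                exact ⟨y, rfl, hr.tail (playstep_srel this)⟩
        have htailv : IsPlay A σ τv v tail := by
          refine ⟨hπ1, fun n => ?_⟩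
          rcases htailreach n with hn | ⟨x, hx, hr⟩
          · have := htail'.2 n
            rw [hn] at this ⊢
            exact this
          · have hxu : x ≠ u := fun h => hreach (h ▸ hr)
            have := htail'.2 n
            rw [hx] at this ⊢
            exact (hstep_conv x hxu _).mpr this
        have hπcons : π = consP u tail := by
          funext n
          cases n with
          | zero => exact hπ.1
          | succ k => rfl
        rw [hπcons, playValue_cons]
        exact prof_add_mono (hub _ ⟨tail, htailv, rfl⟩)
    have := hminu.2 _ ⟨τ', hτ', hmaxu⟩
    have h6 : FinLe pu (pv + unitProf A u) := profLe_fin.mp this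
    simpa [add_comm] using h6

end Master
/-- **Proposition 1, edge weights.** For a reasonable strategy `σ`, the
Dijkstra edge weights `w(u,v) = (℘(u) + 𝒱_σ(v)) − 𝒱_σ(u)` are non-negative on every
edge of `A_⊥|I_σ` (where `𝒱_σ` is finite), and along any path `t_0 … t_n ⊥` of this
restricted graph, `℘(t_0 … t_n) − 𝒱_σ(t_0)` equals the sum of the edge weights. -/
theorem dijkstra_weights_nonneg {V : Type} {d : ℕ} [Fintype V] (A : PGA V d)
    (σ : V → Option V → Prop) (Vσ : Option V → Prof d)
    (hσ : Strategy0 A σ) (hreas : Reasonable A σ) (hV : IsValuation A σ Vσ) :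
    (∀ (u : V) (t : Option V) (pu pt : Fin d → ℤ),
      EdgeRestrI A Vσ (some u) t → Vσ (some u) = .fin pu → Vσ t = .fin pt →
        FinLe 0 (unitProf A u + pt - pu)) ∧
    (∀ (n : ℕ) (t : Fin (n + 1) → V) (f : Fin (n + 2) → (Fin d → ℤ)),
      (∀ i : Fin n, EdgeRestrI A Vσ (some (t i.castSucc)) (some (t i.succ))) →
      Improvement A Vσ (t (Fin.last n)) none →
      (∀ i : Fin (n + 1), Vσ (some (t i)) = .fin (f i.castSucc)) →
      f (Fin.last (n + 1)) = 0 →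
      (∑ i : Fin (n + 1), unitProf A (t i)) - f 0 =
        ∑ i : Fin (n + 1), (unitProf A (t i) + f i.succ - f i.castSucc)) := by
  constructor
  · rintro u t pu pt hedge hu ht
    rcases hedge with ⟨hown, v, rfl, he⟩ | ⟨hown0, hEB, hle⟩
    · exact FinLe_iff_sub.mp (player1_edge hσ hreas hV hown he hu ht)
    · rw [hu, ht] at hle
      have hle' : Prof.Le (Prof.fin pu) (Prof.fin (pt + unitProf A u)) := hle
      have h : FinLe pu (pt + unitProf A u) := profLe_fin.mp hle'
      have h2 := FinLe_iff_sub.mp h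
      have he2 : pt + unitProf A u - pu = unitProf A u + pt - pu := by ring
      rwa [he2] at h2
  · intro n t f hedges hlastimp hval hf0
    classical
    have key : ∑ i : Fin (n+1), (f i.succ - f i.castSucc) = 0 - f 0 := by
      set G : ℕ → (Fin d → ℤ) := fun i => f ⟨min i (n+1), by omega⟩ with hG
      have h1 : ∑ i : Fin (n+1), (f i.succ - f i.castSucc)
          = ∑ i ∈ Finset.range (n+1), (G (i+1) - G i) := by
        rw [← Fin.sum_univ_eq_sum_range]
        apply Finset.sum_congr rfl
        intro i _
        have hi := i.isLt
        have e1 : G ((i : ℕ)+1) = f i.succ :=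
          congrArg f (Fin.ext (by simp only [Fin.val_succ]; omega))
        have e2 : G (i : ℕ) = f i.castSucc :=
          congrArg f (Fin.ext (by simp only [Fin.coe_castSucc]; omega))
        rw [e1, e2]
      rw [h1, Finset.sum_range_sub]
      have e3 : G (n+1) = f (Fin.last (n+1)) :=
        congrArg f (Fin.ext (by simp [Fin.val_last]))
      have e4 : G 0 = f 0 :=
        congrArg f (Fin.ext (by simp))
      rw [e3, e4, hf0]
    have hsplit : ∑ i : Fin (n+1), (unitProf A (t i) + f i.succ - f i.castSucc)
        = (∑ i : Fin (n+1), unitProf A (t i))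
            + ∑ i : Fin (n+1), (f i.succ - f i.castSucc) := by
      rw [← Finset.sum_add_distrib]
      apply Finset.sum_congr rfl
      intro i _
      abel
    rw [hsplit, key]
    abel
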